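/- Let a be a real number and define the operator X on Schwartz functions f : ℝ → ℂ by (X f)(q) = −i*a*( q * f'(q) + f(q)/2 ). Then X is symmetric with respect to the L² inner product: for all Schwartz functions f, g : ℝ → ℂ, ∫ conj((X f)(q)) * g(q) dq = ∫ conj(f(q)) * (X g)(q) dq. -/

import Mathlib

open MeasureTheory Complex

lemma schwartz_bdd (f : SchwartzMap ℝ ℂ) : ∃ C, ∀ x : ℝ, ‖f x‖ ≤ C := by
  obtain ⟨C, _, hC⟩ := f.decay 0 0
  exact ⟨C, fun x => by simpa [norm_iteratedFDeriv_zero] using hC x⟩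

lemma schwartz_q_bdd (f : SchwartzMap ℝ ℂ) : ∃ C, ∀ x : ℝ, ‖(x : ℂ) * f x‖ ≤ C := by
  obtain ⟨C, _, hC⟩ := f.decay 1 0
  refine ⟨C, fun x => ?_⟩
  have := hC x
  simpa [norm_iteratedFDeriv_zero, Complex.norm_real, norm_mul] using this

lemma hasDerivAt_ofReal' (q : ℝ) : HasDerivAt (fun x : ℝ => (x : ℂ)) 1 q := by
  exact Complex.ofRealCLM.hasDerivAt (x := q)


/-- The represented coordinate operator `X = (a/2)(QP + PQ)`:
`(X f)(q) = -i*a*(q * f'(q) + f(q)/2)`. -/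
noncomputable def Xop (a : ℝ) (f : ℝ → ℂ) : ℝ → ℂ :=
  fun q => -Complex.I * (a : ℂ) * ((q : ℂ) * deriv f q + f q / 2)

theorem Xop_symmetric (a : ℝ) (f g : SchwartzMap ℝ ℂ) :
    ∫ q : ℝ, (starRingEnd ℂ) (Xop a ⇑f q) * g q =
      ∫ q : ℝ, (starRingEnd ℂ) (f q) * Xop a ⇑g q := by
  set f' : SchwartzMap ℝ ℂ := SchwartzMap.derivCLM ℝ ℂ f with hf'
  set g' : SchwartzMap ℝ ℂ := SchwartzMap.derivCLM ℝ ℂ g with hg'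
  have hf'eq : ∀ q : ℝ, deriv (⇑f) q = f' q := fun q => rfl
  have hg'eq : ∀ q : ℝ, deriv (⇑g) q = g' q := fun q => rfl
  -- the boundary function and its derivative
  set F : ℝ → ℂ := fun q => (q : ℂ) * (starRingEnd ℂ) (f q) * g q with hF
  set F' : ℝ → ℂ := fun q =>
    (starRingEnd ℂ) (f q) * g q + (q : ℂ) * (starRingEnd ℂ) (f' q) * g q
      + (q : ℂ) * (starRingEnd ℂ) (f q) * g' q with hF'
  have hderiv : ∀ q : ℝ, HasDerivAt F (F' q) q := by
    intro q
    have h1 : HasDerivAt (fun x : ℝ => (x : ℂ) * (starRingEnd ℂ) (f x))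
        ((starRingEnd ℂ) (f q) + (q : ℂ) * (starRingEnd ℂ) (f' q)) q := by
      have := (hasDerivAt_ofReal' q).mul ((f.differentiableAt.hasDerivAt).star)
      simpa [hf'eq, Pi.mul_def] using this
    have h2 := h1.mul (g.differentiableAt.hasDerivAt)
    have : HasDerivAt F
        (((starRingEnd ℂ) (f q) + (q : ℂ) * (starRingEnd ℂ) (f' q)) * g q
          + (q : ℂ) * (starRingEnd ℂ) (f q) * g' q) q := by
      simpa [hF, hg'eq, mul_assoc, Pi.mul_def] using h2
    convert this using 1
    simp [hF']; ring
  -- measurability/boundedness helpers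
  have hconj_cont : Continuous fun q : ℝ => (starRingEnd ℂ) (f q) :=
    Complex.continuous_conj.comp f.continuous
  have hconj'_cont : Continuous fun q : ℝ => (starRingEnd ℂ) (f' q) :=
    Complex.continuous_conj.comp f'.continuous
  -- integrability of the three pieces of F'
  have hint1 : Integrable (fun q : ℝ => (starRingEnd ℂ) (f q) * g q) := by
    obtain ⟨C, hC⟩ := schwartz_bdd f
    refine g.integrable.bdd_mul (c := C) hconj_cont.aestronglyMeasurable ?_
    exact Filter.Eventually.of_forall fun x => by simpa using hC x
  have hint2 : Integrable (fun q : ℝ => (q : ℂ) * (starRingEnd ℂ) (f' q) * g q) := by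
    obtain ⟨C, hC⟩ := schwartz_q_bdd f'
    refine g.integrable.bdd_mul (c := C)
      ((continuous_ofReal.comp continuous_id).mul hconj'_cont).aestronglyMeasurable ?_
    refine Filter.Eventually.of_forall fun x => ?_
    have := hC x
    simpa [norm_mul] using this
  have hint3 : Integrable (fun q : ℝ => (q : ℂ) * (starRingEnd ℂ) (f q) * g' q) := by
    obtain ⟨C, hC⟩ := schwartz_q_bdd f
    refine g'.integrable.bdd_mul (c := C)
      ((continuous_ofReal.comp continuous_id).mul hconj_cont).aestronglyMeasurable ?_
    refine Filter.Eventually.of_forall fun x => ?_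
    have := hC x
    simpa [norm_mul] using this
  have hintF' : Integrable F' := (hint1.add hint2).add hint3
  have hintF : Integrable F := by
    obtain ⟨C, hC⟩ := schwartz_q_bdd f
    refine g.integrable.bdd_mul (c := C)
      ((continuous_ofReal.comp continuous_id).mul hconj_cont).aestronglyMeasurable ?_
    refine Filter.Eventually.of_forall fun x => ?_
    have := hC x
    simpa [norm_mul] using this
  have hzero : ∫ q : ℝ, F' q = 0 :=
    integral_eq_zero_of_hasDerivAt_of_integrable hderiv hintF' hintF
  -- integrability of the two integrands in the statement
  have hA : Integrable (fun q : ℝ => (starRingEnd ℂ) (Xop a ⇑f q) * g q) := by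
    have : (fun q : ℝ => (starRingEnd ℂ) (Xop a ⇑f q) * g q)
        = fun q : ℝ => Complex.I * (a : ℂ) * ((q : ℂ) * (starRingEnd ℂ) (f' q) * g q)
          + (Complex.I * (a : ℂ) / 2) * ((starRingEnd ℂ) (f q) * g q) := by
      funext q
      simp only [Xop, hf'eq, map_mul, map_add, map_neg, Complex.conj_I, Complex.conj_ofReal,
        map_div₀, Complex.conj_ofReal]
      rw [map_ofNat]
      ring
    rw [this]
    exact (hint2.const_mul _).add (hint1.const_mul _)
  have hB : Integrable (fun q : ℝ => (starRingEnd ℂ) (f q) * Xop a ⇑g q) := by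
    have : (fun q : ℝ => (starRingEnd ℂ) (f q) * Xop a ⇑g q)
        = fun q : ℝ => (-Complex.I * (a : ℂ)) * ((q : ℂ) * (starRingEnd ℂ) (f q) * g' q)
          + (-Complex.I * (a : ℂ) / 2) * ((starRingEnd ℂ) (f q) * g q) := by
      funext q
      simp only [Xop, hg'eq]
      ring
    rw [this]
    exact (hint3.const_mul _).add (hint1.const_mul _)
  -- main computation
  have key : ∀ q : ℝ, (starRingEnd ℂ) (Xop a ⇑f q) * g q
      - (starRingEnd ℂ) (f q) * Xop a ⇑g q = Complex.I * (a : ℂ) * F' q := by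
    intro q
    simp only [Xop, hf'eq, hg'eq, hF', map_mul, map_add, map_neg, Complex.conj_I,
      map_div₀, Complex.conj_ofReal]
    rw [map_ofNat]
    ring
  have : (∫ q : ℝ, (starRingEnd ℂ) (Xop a ⇑f q) * g q)
      - ∫ q : ℝ, (starRingEnd ℂ) (f q) * Xop a ⇑g q = 0 := by
    rw [← integral_sub hA hB]
    calc ∫ q : ℝ, ((starRingEnd ℂ) (Xop a ⇑f q) * g q - (starRingEnd ℂ) (f q) * Xop a ⇑g q)
        = ∫ q : ℝ, Complex.I * (a : ℂ) * F' q := by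
          congr 1; funext q; exact key q
      _ = Complex.I * (a : ℂ) * ∫ q : ℝ, F' q := integral_const_mul _ _
      _ = 0 := by rw [hzero, mul_zero]
  exact sub_eq_zero.mp this
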